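/- If a characteristic function h belongs to the domain of attraction of a stable law with characteristic function ω(t) = e^{-ψ(t)} via norming constants a_n > 0, b_n (i.e., exp{-n(1 - h_n(t))} → e^{-ψ(t)} where h_n(t) = h(t/a_n)e^{-itb_n}), then for any Laplace transform φ of a positive random variable and any PGF family P_θ(s) = s^j φ((1-s^k)/θ), one has P_{1/n}(h_n(t)) → φ(k ψ(t)) for all t ∈ ℝ; i.e., h belongs to the domain of φ-attraction of the φ-stable law with characteristic function φ(kψ). -/

import Mathlib

open MeasureTheory Filter Topology

set_option maxHeartbeats 1000000

/-- `ω` is the characteristic function of a real random variable. -/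
def IsCharFun (ω : ℝ → ℂ) : Prop :=
  ∃ μ : Measure ℝ, IsProbabilityMeasure μ ∧
    ∀ t : ℝ, ω t = ∫ x, Complex.exp (t * x * Complex.I) ∂μ

/-- if the characteristic function `h` is in the domain of attraction of the
stable law `ω = e^{-ψ}` via norming constants `a_n > 0`, `b_n`, i.e. with
`h_n(t) = h(t/a_n)·e^{-itb_n}` one has `n(1 - h_n(t)) → ψ(t)` (equivalently
`exp{-n(1 - h_n(t))} → e^{-ψ(t)}`), then for any Laplace transform `φ(z) = ∫ e^{-z·x} dμ(x)`
of a positive random variable and the PGF family `P_θ(s) = s^j φ((1-s^k)/θ)` with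
`θ_n = 1/n`, one has `P_{1/n}(h_n(t)) = h_n(t)^j φ(n(1 - h_n(t)^k)) → φ(kψ(t))`
for all `t`: `h` is in the domain of φ-attraction of the φ-stable law `φ(kψ)`. -/
theorem domain_of_phi_attraction (μ : Measure ℝ) (hprob : IsProbabilityMeasure μ)
    (hpos : ∀ᵐ x ∂μ, 0 < x)
    (h : ℝ → ℂ) (hCF : IsCharFun h)
    (a b : ℕ → ℝ) (ha : ∀ n, 0 < a n)
    (ψ : ℝ → ℂ)
    (hDA : ∀ t : ℝ,
      Tendsto (fun n : ℕ =>
          (n : ℂ) * (1 - h (t / a n) * Complex.exp (-(t * b n) * Complex.I)))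
        atTop (𝓝 (ψ t)))
    (j k : ℕ) (hk : 1 ≤ k) :
    ∀ t : ℝ,
      Tendsto (fun n : ℕ =>
          (h (t / a n) * Complex.exp (-(t * b n) * Complex.I)) ^ j *
            ∫ x, Complex.exp
              (-((n : ℂ) * (1 - (h (t / a n) * Complex.exp (-(t * b n) * Complex.I)) ^ k)) * x) ∂μ)
        atTop (𝓝 (∫ x, Complex.exp (-((k : ℂ) * ψ t) * x) ∂μ)) := by
  obtain ⟨ν, hν, hrep⟩ := hCF
  intro t
  set hn : ℕ → ℂ := fun n => h (t / a n) * Complex.exp (-(t * b n) * Complex.I) with hhn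
  -- |h s| ≤ 1 for every real s
  have habs_h : ∀ s : ℝ, ‖h s‖ ≤ 1 := by
    intro s
    rw [hrep]
    calc ‖∫ x, Complex.exp (↑s * ↑x * Complex.I) ∂ν‖
        ≤ ∫ x, ‖Complex.exp (↑s * ↑x * Complex.I)‖ ∂ν := norm_integral_le_integral_norm _
      _ ≤ 1 := by
          have : ∀ x : ℝ, ‖Complex.exp (↑s * ↑x * Complex.I)‖ = 1 := by
            intro x
            rw [Complex.norm_exp]
            simp [Complex.mul_re, Complex.mul_im]
          simp only [this]
          simp [measure_univ]
  have habs : ∀ n, ‖hn n‖ ≤ 1 := by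
    intro n
    rw [hhn]
    simp only [norm_mul, Complex.norm_exp]
    have : (-(↑t * ↑(b n)) * Complex.I).re = 0 := by
      simp [Complex.mul_re, Complex.mul_im]
    rw [this, Real.exp_zero, mul_one]
    exact habs_h _
  -- hn → 1
  have hinv : Tendsto (fun n : ℕ => ((1 / n : ℝ) : ℂ)) atTop (𝓝 0) := by
    have := tendsto_one_div_atTop_nhds_zero_nat (𝕜 := ℝ)
    have := (Complex.continuous_ofReal.tendsto 0).comp this
    simpa [Function.comp_def, one_div] using this
  have hsub : Tendsto (fun n : ℕ => 1 - hn n) atTop (𝓝 0) := by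
    have hmul : Tendsto (fun n : ℕ => ((n : ℂ) * (1 - hn n)) * ((1 / n : ℝ) : ℂ))
        atTop (𝓝 (ψ t * 0)) := (hDA t).mul hinv
    rw [mul_zero] at hmul
    apply hmul.congr'
    filter_upwards [eventually_ge_atTop 1] with n hn1
    have hne : (n : ℂ) ≠ 0 := by
      exact_mod_cast Nat.cast_ne_zero.mpr (by omega)
    push_cast
    field_simp
  have hn_lim : Tendsto hn atTop (𝓝 1) := by
    have := (tendsto_const_nhds (x := (1:ℂ)) (f := atTop)).sub hsub
    simpa using this
  -- n (1 - hn^k) → k ψ t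
  have hk_lim : Tendsto (fun n : ℕ => (n : ℂ) * (1 - hn n ^ k)) atTop (𝓝 ((k : ℂ) * ψ t)) := by
    have hsum : Tendsto (fun n : ℕ => ∑ i ∈ Finset.range k, hn n ^ i) atTop (𝓝 (k : ℂ)) := by
      have : Tendsto (fun n : ℕ => ∑ i ∈ Finset.range k, hn n ^ i) atTop
          (𝓝 (∑ i ∈ Finset.range k, (1:ℂ) ^ i)) :=
        tendsto_finset_sum _ fun i _ => hn_lim.pow i
      simpa using this
    have hmul := (hDA t).mul hsum
    have heq : ∀ n : ℕ, ((n : ℂ) * (1 - hn n)) * (∑ i ∈ Finset.range k, hn n ^ i)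
        = (n : ℂ) * (1 - hn n ^ k) := by
      intro n
      have hg := geom_sum_mul (hn n) k
      linear_combination (-(n : ℂ)) * hg
    have : Tendsto (fun n : ℕ => (n : ℂ) * (1 - hn n ^ k)) atTop (𝓝 (ψ t * k)) := by
      apply hmul.congr
      intro n; exact heq n
    simpa [mul_comm] using this
  -- nonnegativity of real part
  have hRe : ∀ n : ℕ, 0 ≤ ((n : ℂ) * (1 - hn n ^ k)).re := by
    intro n
    have h1 : ‖hn n ^ k‖ ≤ 1 := by
      rw [norm_pow]
      exact pow_le_one₀ (norm_nonneg _) (habs n)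
    have hre : (hn n ^ k).re ≤ 1 := le_trans (Complex.re_le_norm _) h1
    have hcalc : ((n : ℂ) * (1 - hn n ^ k)).re = (n : ℝ) * (1 - (hn n ^ k).re) := by
      simp [Complex.mul_re]
    rw [hcalc]
    exact mul_nonneg (Nat.cast_nonneg n) (by linarith)
  -- convergence of the integrals
  have hint : Tendsto (fun n : ℕ =>
      ∫ x, Complex.exp (-((n : ℂ) * (1 - hn n ^ k)) * x) ∂μ)
      atTop (𝓝 (∫ x, Complex.exp (-((k : ℂ) * ψ t) * x) ∂μ)) := by
    apply tendsto_integral_of_dominated_convergence (fun _ : ℝ => (1 : ℝ))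
    · intro n
      exact (Complex.continuous_exp.comp
        (continuous_const.mul Complex.continuous_ofReal)).aestronglyMeasurable
    · exact integrable_const 1
    · intro n
      filter_upwards [hpos] with x hx
      rw [Complex.norm_exp]
      have hre : (-((n : ℂ) * (1 - hn n ^ k)) * (x : ℂ)).re
          = -(((n : ℂ) * (1 - hn n ^ k)).re) * x := by
        simp [Complex.mul_re]
      rw [hre]
      have : -(((n : ℂ) * (1 - hn n ^ k)).re) * x ≤ 0 := by
        have := mul_nonneg (hRe n) hx.le
        nlinarith
      calc Real.exp _ ≤ Real.exp 0 := Real.exp_le_exp.mpr this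
        _ = 1 := Real.exp_zero
    · filter_upwards with x
      have hc : Continuous fun z : ℂ => Complex.exp (-z * x) := by
        continuity
      exact (hc.tendsto _).comp hk_lim
  have hj : Tendsto (fun n : ℕ => hn n ^ j) atTop (𝓝 1) := by
    simpa using hn_lim.pow j
  have := hj.mul hint
  rw [one_mul] at this
  simpa [hhn] using this
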